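/- Suppose the Hessian map x ↦ ∇²f(x) is L₂-Lipschitz in operator norm with L₂ > 0, and let θ ∈ (0,1/2), ζ ∈ (θ,1). Let x⁰ ∈ E, μ > 0, H = ∇²f(x⁰) + μ·Id, and let x̂ ∈ E satisfy q(x̂) − q(x⁰) ≤ ζ·(ℓ(x̂) − ℓ(x⁰)). If ‖x̂ − x⁰‖ ≤ (1 + (ζ−θ)/(1−ζ))·(3μ/L₂), then F(x̂) − F(x⁰) ≤ θ·(ℓ(x̂) − ℓ(x⁰)); that is, the line-search descent condition is satisfied with unit step size. -/

import Mathlib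

open scoped RealInnerProductSpace

abbrev E (n : ℕ) := EuclideanSpace ℝ (Fin n)

/-- If the Hessian map is L₂-Lipschitz in operator norm,
`θ ∈ (0,1/2)`, `ζ ∈ (θ,1)`, `μ > 0`, `H = ∇²f(x⁰) + μ·Id`, `x̂` satisfies
`q(x̂) − q(x⁰) ≤ ζ(ℓ(x̂) − ℓ(x⁰))` and `‖x̂ − x⁰‖ ≤ (1 + (ζ−θ)/(1−ζ))·(3μ/L₂)`,
then `F(x̂) − F(x⁰) ≤ θ(ℓ(x̂) − ℓ(x⁰))`, i.e., unit step size passes the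
line-search descent condition. -/
theorem stmt11 {n : ℕ} (f g : E n → ℝ) (f' : E n → E n)
    (hess : E n → E n →L[ℝ] E n)
    (hfconv : ConvexOn ℝ Set.univ f) (hfC2 : ContDiff ℝ 2 f)
    (hgrad : ∀ x, HasGradientAt f (f' x) x)
    (hhess : ∀ x, HasFDerivAt f' (hess x) x)
    (hsa : ∀ x u w, ⟪hess x u, w⟫ = ⟪u, hess x w⟫)
    (hgconv : ConvexOn ℝ Set.univ g) (hgcont : Continuous g)
    (F : E n → ℝ) (hF : ∀ y, F y = f y + g y)
    (L₂ : ℝ) (hL₂ : 0 < L₂) (hlip2 : ∀ y z, ‖hess y - hess z‖ ≤ L₂ * ‖y - z‖)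
    (θ ζ : ℝ) (hθ : θ ∈ Set.Ioo (0:ℝ) (1/2)) (hζ : ζ ∈ Set.Ioo θ 1)
    (x₀ : E n) (μ : ℝ) (hμ : 0 < μ)
    (H : E n →L[ℝ] E n) (hH : H = hess x₀ + μ • ContinuousLinearMap.id ℝ (E n))
    (ℓ q : E n → ℝ)
    (hℓ : ∀ y, ℓ y = f x₀ + ⟪f' x₀, y - x₀⟫ + g y)
    (hq : ∀ y, q y = ℓ y + (1/2) * ⟪H (y - x₀), y - x₀⟫)
    (xh : E n) (hxh : q xh - q x₀ ≤ ζ * (ℓ xh - ℓ x₀))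
    (hclose : ‖xh - x₀‖ ≤ (1 + (ζ - θ) / (1 - ζ)) * (3 * μ / L₂)) :
    F xh - F x₀ ≤ θ * (ℓ xh - ℓ x₀) := by
  obtain ⟨hθ0, hθh⟩ := hθ
  obtain ⟨hζθ, hζ1⟩ := hζ
  set d : E n := xh - x₀ with hd
  set r : ℝ := ‖d‖ with hrdef
  have hr : 0 ≤ r := norm_nonneg _
  set M : ℝ := L₂ * (r * r * r) with hM
  have hMnn : 0 ≤ M := by positivity
  -- derivative setup along the segment
  have hc : ∀ t : ℝ, HasDerivAt (fun t : ℝ => x₀ + t • d) d t := by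
    intro t
    simpa using ((hasDerivAt_id t).smul_const d).const_add x₀
  set h : ℝ → ℝ := fun t => f (x₀ + t • d) with hhdef
  set p : ℝ → ℝ := fun t => ⟪f' (x₀ + t • d), d⟫ with hpdef
  set s : ℝ → ℝ := fun t => ⟪hess (x₀ + t • d) d, d⟫ with hsdef
  have hh : ∀ t : ℝ, HasDerivAt h (p t) t := by
    intro t
    have := ((hgrad (x₀ + t • d)).hasFDerivAt.comp_hasDerivAt t (hc t))
    simpa [h, p, InnerProductSpace.toDual_apply_apply, Function.comp_def] using this
  have hp : ∀ t : ℝ, HasDerivAt p (s t) t := by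
    intro t
    have h1 : HasDerivAt (fun t : ℝ => f' (x₀ + t • d)) (hess (x₀ + t • d) d) t :=
      (hhess (x₀ + t • d)).comp_hasDerivAt t (hc t)
    simpa [p, s] using h1.inner ℝ (hasDerivAt_const t d)
  -- Lipschitz bound on s
  have slip : ∀ t u : ℝ, s t - s u ≤ L₂ * |t - u| * (r * r * r) := by
    intro t u
    have heq : s t - s u = ⟪(hess (x₀ + t • d) - hess (x₀ + u • d)) d, d⟫ := by
      simp [s, ContinuousLinearMap.sub_apply, inner_sub_left]
    have h1 : ⟪(hess (x₀ + t • d) - hess (x₀ + u • d)) d, d⟫ ≤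
        ‖(hess (x₀ + t • d) - hess (x₀ + u • d)) d‖ * ‖d‖ := real_inner_le_norm _ _
    have h2 : ‖(hess (x₀ + t • d) - hess (x₀ + u • d)) d‖ ≤
        ‖hess (x₀ + t • d) - hess (x₀ + u • d)‖ * ‖d‖ :=
      (hess (x₀ + t • d) - hess (x₀ + u • d)).le_opNorm d
    have h3 : ‖hess (x₀ + t • d) - hess (x₀ + u • d)‖ ≤ L₂ * (|t - u| * r) := by
      have := hlip2 (x₀ + t • d) (x₀ + u • d)
      have he : x₀ + t • d - (x₀ + u • d) = (t - u) • d := by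
        rw [sub_smul]; abel
      rw [he, norm_smul] at this
      rw [Real.norm_eq_abs] at this
      exact this
    calc s t - s u = ⟪(hess (x₀ + t • d) - hess (x₀ + u • d)) d, d⟫ := heq
      _ ≤ ‖(hess (x₀ + t • d) - hess (x₀ + u • d)) d‖ * ‖d‖ := h1
      _ ≤ (‖hess (x₀ + t • d) - hess (x₀ + u • d)‖ * ‖d‖) * ‖d‖ :=
          mul_le_mul_of_nonneg_right h2 hr
      _ ≤ ((L₂ * (|t - u| * r)) * r) * r := by
          apply mul_le_mul_of_nonneg_right _ hr
          exact mul_le_mul_of_nonneg_right h3 hr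
      _ = L₂ * |t - u| * (r * r * r) := by ring
  -- convexity of h and monotonicity of p
  have hconv1 : ConvexOn ℝ Set.univ h := by
    have hcomp := hfconv.comp_affineMap (AffineMap.lineMap x₀ (x₀ + d))
    have he : (f ∘ ⇑(AffineMap.lineMap x₀ (x₀ + d))) = h := by
      funext t
      simp [h, AffineMap.lineMap_apply, add_comm]
    rw [he] at hcomp
    simpa using hcomp
  have pmono : Monotone p := by
    intro a b hab
    rcases eq_or_lt_of_le hab with rfl | hab'
    · exact le_refl _
    · have h1 : p a ≤ slope h a b :=
        hconv1.le_slope_of_hasDerivAt (Set.mem_univ a) (Set.mem_univ b) hab' (hh a)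
      have h2 : slope h a b ≤ p b :=
        hconv1.slope_le_of_hasDerivAt (Set.mem_univ a) (Set.mem_univ b) hab' (hh b)
      linarith
  -- positive semidefiniteness at 0
  have hs0 : 0 ≤ s 0 := by
    have hten : Filter.Tendsto (slope p 0) (nhdsWithin 0 {(0:ℝ)}ᶜ) (nhds (s 0)) :=
      hasDerivAt_iff_tendsto_slope.mp (hp 0)
    have hten' : Filter.Tendsto (slope p 0) (nhdsWithin 0 (Set.Ioi 0)) (nhds (s 0)) :=
      hten.mono_left (nhdsWithin_mono _ (fun x hx => ne_of_gt hx))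
    refine ge_of_tendsto hten' ?_
    filter_upwards [self_mem_nhdsWithin] with t ht
    have hpt : p 0 ≤ p t := pmono (le_of_lt ht)
    rw [slope_def_field]
    have : (0:ℝ) < t - 0 := by simpa using ht
    exact div_nonneg (by linarith) this.le
  -- Taylor bound level 1 : u t ≤ 0 on [0,1]
  set uu : ℝ → ℝ := fun t => p t - p 0 - t * s 0 - M / 2 * t ^ 2 with huu
  have hud : ∀ t : ℝ, HasDerivAt uu (s t - s 0 - M * t) t := by
    intro t
    have h1 : HasDerivAt (fun t : ℝ => p t - p 0 - t * s 0 - M / 2 * t ^ 2)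
        (s t - (1 * s 0) - M / 2 * (2 * t ^ 1)) t := by
      exact (((hp t).sub_const (p 0)).sub ((hasDerivAt_id t).mul_const (s 0))).sub
        ((hasDerivAt_pow 2 t).const_mul (M / 2))
    have : s t - (1 * s 0) - M / 2 * (2 * t ^ 1) = s t - s 0 - M * t := by ring
    rw [this] at h1
    exact h1
  have huanti : AntitoneOn uu (Set.Icc 0 1) := by
    apply antitoneOn_of_deriv_nonpos (convex_Icc 0 1)
    · exact fun t _ => (hud t).continuousAt.continuousWithinAt
    · intro t _
      exact (hud t).differentiableAt.differentiableWithinAt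
    · intro t ht
      rw [interior_Icc] at ht
      rw [(hud t).deriv]
      have := slip t 0
      simp only [sub_zero] at this
      rw [abs_of_pos ht.1] at this
      have : s t - s 0 ≤ M * t := by
        calc s t - s 0 ≤ L₂ * t * (r * r * r) := this
          _ = M * t := by rw [hM]; ring
      linarith
  have huneg : ∀ t ∈ Set.Icc (0:ℝ) 1, uu t ≤ 0 := by
    intro t ht
    have h0 : uu 0 = 0 := by simp [huu]
    have := huanti (Set.left_mem_Icc.mpr zero_le_one) ht ht.1
    linarith
  -- Taylor bound level 2
  set vv : ℝ → ℝ := fun t => h t - h 0 - t * p 0 - t ^ 2 / 2 * s 0 - M / 6 * t ^ 3 with hvv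
  have hvd : ∀ t : ℝ, HasDerivAt vv (uu t) t := by
    intro t
    have h1 : HasDerivAt (fun t : ℝ => h t - h 0 - t * p 0 - t ^ 2 / 2 * s 0 - M / 6 * t ^ 3)
        (p t - (1 * p 0) - (2 * t ^ 1) / 2 * s 0 - M / 6 * (3 * t ^ 2)) t := by
      exact ((((hh t).sub_const (h 0)).sub ((hasDerivAt_id t).mul_const (p 0))).sub
        (((hasDerivAt_pow 2 t).div_const 2).mul_const (s 0))).sub
        ((hasDerivAt_pow 3 t).const_mul (M / 6))
    have : p t - (1 * p 0) - (2 * t ^ 1) / 2 * s 0 - M / 6 * (3 * t ^ 2) = uu t := by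
      rw [huu]; ring
    rw [this] at h1
    exact h1
  have hvanti : AntitoneOn vv (Set.Icc 0 1) := by
    apply antitoneOn_of_deriv_nonpos (convex_Icc 0 1)
    · exact fun t _ => (hvd t).continuousAt.continuousWithinAt
    · intro t _
      exact (hvd t).differentiableAt.differentiableWithinAt
    · intro t ht
      rw [interior_Icc] at ht
      rw [(hvd t).deriv]
      exact huneg t ⟨ht.1.le, ht.2.le⟩
  have hv1 : vv 1 ≤ 0 := by
    have h0 : vv 0 = 0 := by simp [hvv]
    have := hvanti (Set.left_mem_Icc.mpr zero_le_one) (Set.right_mem_Icc.mpr zero_le_one)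
      zero_le_one
    linarith
  have hx1 : x₀ + (1:ℝ) • d = xh := by
    rw [hd]; simp
  have hx0 : x₀ + (0:ℝ) • d = x₀ := by simp
  have htaylor : f xh - f x₀ - ⟪f' x₀, d⟫ - s 0 / 2 - M / 6 ≤ 0 := by
    have : vv 1 = f xh - f x₀ - ⟪f' x₀, d⟫ - s 0 / 2 - M / 6 := by
      simp only [hvv, h, p, one_smul, one_pow, one_mul]
      rw [show x₀ + d = xh from by rw [hd]; simp, show x₀ + (0:ℝ) • d = x₀ from by simp]
      ring
    linarith [hv1, this ▸ hv1]
  -- arithmetic with ℓ, q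
  set D : ℝ := ℓ xh - ℓ x₀ with hD
  have hℓ0 : ℓ x₀ = f x₀ + g x₀ := by simp [hℓ x₀]
  have hDval : D = ⟪f' x₀, d⟫ + g xh - g x₀ := by
    rw [hD, hℓ xh, hℓ0, hd]; ring
  have hq0 : q x₀ = ℓ x₀ := by simp [hq x₀]
  have hHdd : ⟪H d, d⟫ = s 0 + μ * (r * r) := by
    rw [hH]
    simp only [ContinuousLinearMap.add_apply, ContinuousLinearMap.coe_smul',
      Pi.smul_apply, ContinuousLinearMap.coe_id', id_eq, inner_add_left,
      real_inner_smul_left]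
    rw [real_inner_self_eq_norm_mul_norm]
    simp [s, hx0, hrdef]
  have hqx : q xh - q x₀ = D + (1/2) * (s 0 + μ * (r * r)) := by
    rw [hq xh, hq0, ← hd, hHdd, hD]; ring
  have hkey : D + (1/2) * (s 0 + μ * (r * r)) ≤ ζ * D := by
    rw [← hqx]; exact hxh
  -- final computation
  set a : ℝ := (ζ - θ) / (1 - ζ) with ha
  have h1ζ : (0:ℝ) < 1 - ζ := by linarith
  have hann : 0 ≤ a := div_nonneg (by linarith) h1ζ.le
  have hae : a * (1 - ζ) = ζ - θ := div_mul_cancel₀ _ h1ζ.ne'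
  have hclose' : L₂ * r ≤ (1 + a) * (3 * μ) := by
    have := mul_le_mul_of_nonneg_left hclose hL₂.le
    calc L₂ * r ≤ L₂ * ((1 + a) * (3 * μ / L₂)) := this
      _ = (1 + a) * (3 * μ) := by field_simp
  have hFd : F xh - F x₀ ≤ D + s 0 / 2 + M / 6 := by
    rw [hF xh, hF x₀, hDval]
    linarith [htaylor]
  have h1 : (1 - ζ) * D ≤ -(μ * (r * r)) / 2 - s 0 / 2 := by linarith [hkey]
  have hMr : M = (L₂ * r) * (r * r) := by rw [hM]; ring
  have hrr : (0:ℝ) ≤ r * r := mul_nonneg hr hr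
  have hM6 : M / 6 ≤ (1 + a) * (μ * (r * r)) / 2 := by
    rw [hMr]
    have h := mul_le_mul_of_nonneg_right hclose' hrr
    have e : (1 + a) * (3 * μ) * (r * r) = 6 * ((1 + a) * (μ * (r * r)) / 2) := by ring
    linarith
  have h2 : a * ((1 - ζ) * D) ≤ a * (-(μ * (r * r)) / 2) := by
    apply mul_le_mul_of_nonneg_left _ hann
    linarith
  have h2' : (ζ - θ) * D ≤ -(a * (μ * (r * r))) / 2 := by
    calc (ζ - θ) * D = a * ((1 - ζ) * D) := by rw [← mul_assoc, hae]
      _ ≤ a * (-(μ * (r * r)) / 2) := h2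
      _ = -(a * (μ * (r * r))) / 2 := by ring
  have e3 : (1 + a) * (μ * (r * r)) = μ * (r * r) + a * (μ * (r * r)) := by ring
  have e4 : (ζ - θ) * D = ζ * D - θ * D := by ring
  clear_value a D M r
  linarith [hFd, hkey, hM6, hs0]
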